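/- For every λ > 0 and all configurations x, y ∈ E^N, the critical action potential satisfies the homogeneity relation φ(λx, λy) = λ^{1−κ} φ(x,y). -/

import Mathlib

open MeasureTheory Set
open scoped ENNReal

noncomputable section NBody

variable {E : Type*} [NormedAddCommGroup E] [InnerProductSpace ℝ E] [FiniteDimensional ℝ E]

/-- The homogeneous potential `U_κ` of degree `-2κ`, with value `∞` at collisions. -/
def pot {N : ℕ} (κ : ℝ) (m : Fin N → ℝ) (x : Fin N → E) : ℝ≥0∞ :=
  ∑ p ∈ Finset.univ.filter (fun p : Fin N × Fin N => p.1 < p.2),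
    ENNReal.ofReal (m p.1 * m p.2) * ENNReal.ofReal ‖x p.1 - x p.2‖ ^ (-(2 * κ))

/-- `γ` is absolutely continuous on `[a,b]`, with a.e. derivative `γ'`
(integrable and satisfying the fundamental theorem of calculus). -/
def ACPair {N : ℕ} (γ γ' : ℝ → Fin N → E) (a b : ℝ) : Prop :=
  IntervalIntegrable γ' volume a b ∧
    ∀ t ∈ Icc a b, γ t = γ a + ∫ s in a..t, γ' s

/-- Lagrangian action of an absolutely continuous curve on `[a,b]`:
kinetic part (w.r.t. the mass scalar product) plus potential part. -/
def action {N : ℕ} (κ : ℝ) (m : Fin N → ℝ) (γ γ' : ℝ → Fin N → E) (a b : ℝ) : ℝ≥0∞ :=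
  ∫⁻ t in Ioc a b,
    (ENNReal.ofReal ((1 / 2) * ∑ i, m i * ‖γ' t i‖ ^ 2) + pot κ m (γ t))

/-- `φ(x,y,T)`: minimal action among absolutely continuous curves binding `x` to `y`
in time `T`. -/
def phiT {N : ℕ} (κ : ℝ) (m : Fin N → ℝ) (x y : Fin N → E) (T : ℝ) : ℝ≥0∞ :=
  ⨅ (γ : ℝ → Fin N → E) (γ' : ℝ → Fin N → E)
    (_ : ACPair γ γ' 0 T ∧ γ 0 = x ∧ γ T = y), action κ m γ γ' 0 T

/-- The critical (Mañé) action potential `φ(x,y) = inf_{T>0} φ(x,y,T)`. -/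
def phi {N : ℕ} (κ : ℝ) (m : Fin N → ℝ) (x y : Fin N → E) : ℝ≥0∞ :=
  ⨅ (T : ℝ) (_ : 0 < T), phiT κ m x y T

/-- A function is dominated if `u(x) - u(y) ≤ φ(x,y)` for all `x, y`. -/
def Dominated {N : ℕ} (κ : ℝ) (m : Fin N → ℝ) (u : (Fin N → E) → ℝ) : Prop :=
  ∀ x y, ENNReal.ofReal (u x - u y) ≤ phi κ m x y

/-- The Lax–Oleinik semigroup `T_t⁻ u (x) = inf_y (u(y) + φ(x,y,t))`, with `T_0⁻ u = u`. -/
def lax {N : ℕ} (κ : ℝ) (m : Fin N → ℝ) (u : (Fin N → E) → ℝ) (t : ℝ)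
    (x : Fin N → E) : EReal :=
  if t = 0 then (u x : EReal)
  else ⨅ y : Fin N → E, ((u y : EReal) + ((phiT κ m x y t : ℝ≥0∞) : EReal))

/-- Squared dual norm (w.r.t. the mass scalar product) of a linear form on `E^N`:
`|p|² = ∑ᵢ mᵢ⁻¹ ‖pᵢ‖²`. -/
def dualNormSq {N : ℕ} (m : Fin N → ℝ) (p : (Fin N → E) →L[ℝ] ℝ) : ℝ :=
  ∑ i, (m i)⁻¹ * ‖p.comp (LinearMap.single ℝ (fun _ : Fin N => E) i).toContinuousLinearMap‖ ^ 2

end NBody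

section HomogAux

open Real

variable {E : Type*} [NormedAddCommGroup E] [InnerProductSpace ℝ E] [FiniteDimensional ℝ E]

/-- Change of variables `t = c s` for lower integrals over `Ioc`. -/
lemma lintegral_Ioc_scale {c T : ℝ} (hc : 0 < c) (g : ℝ → ℝ≥0∞) :
    ∫⁻ t in Ioc 0 (c * T), g (c⁻¹ * t) = ENNReal.ofReal c * ∫⁻ s in Ioc 0 T, g s := by
  have hc' : c ≠ 0 := hc.ne'
  have hemb : MeasurableEmbedding (fun s : ℝ => c * s) :=
    (Homeomorph.mulLeft₀ c hc').isClosedEmbedding.measurableEmbedding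
  have hmap : Measure.map (fun s : ℝ => c * s) (volume.restrict (Ioc 0 T))
      = ENNReal.ofReal c⁻¹ • volume.restrict (Ioc 0 (c * T)) := by
    have h1 : ((fun s : ℝ => c * s) ⁻¹' (Ioc 0 (c * T))) = Ioc 0 T := by
      rw [preimage_const_mul_Ioc₀ _ _ hc, zero_div, mul_div_cancel_left₀ _ hc']
    rw [← h1, ← Measure.restrict_map (measurable_const_mul c) measurableSet_Ioc,
      Real.map_volume_mul_left hc', abs_inv, abs_of_pos hc, Measure.restrict_smul]
  have key : ENNReal.ofReal c⁻¹ * ∫⁻ t in Ioc 0 (c * T), g (c⁻¹ * t)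
      = ∫⁻ s in Ioc 0 T, g s := by
    rw [← smul_eq_mul, ← lintegral_smul_measure, ← hmap, hemb.lintegral_map]
    exact lintegral_congr fun s => by rw [inv_mul_cancel_left₀ hc']
  calc ∫⁻ t in Ioc 0 (c * T), g (c⁻¹ * t)
      = (ENNReal.ofReal c * ENNReal.ofReal c⁻¹) * ∫⁻ t in Ioc 0 (c * T), g (c⁻¹ * t) := by
        rw [← ENNReal.ofReal_mul hc.le, mul_inv_cancel₀ hc', ENNReal.ofReal_one, one_mul]
    _ = ENNReal.ofReal c * ∫⁻ s in Ioc 0 T, g s := by rw [mul_assoc, key]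

lemma pot_smul {N : ℕ} (κ : ℝ) (m : Fin N → ℝ) {lam : ℝ} (hl : 0 < lam) (x : Fin N → E) :
    pot κ m (lam • x) = ENNReal.ofReal (lam ^ (-(2 * κ))) * pot κ m x := by
  unfold pot
  rw [Finset.mul_sum]
  refine Finset.sum_congr rfl fun p _ => ?_
  have h1 : (lam • x) p.1 - (lam • x) p.2 = lam • (x p.1 - x p.2) := by
    simp [smul_sub]
  rw [h1, norm_smul, Real.norm_eq_abs, abs_of_pos hl, ENNReal.ofReal_mul hl.le,
    ENNReal.mul_rpow_of_ne_top ENNReal.ofReal_ne_top ENNReal.ofReal_ne_top,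
    ENNReal.ofReal_rpow_of_pos hl]
  ring

lemma kin_smul {N : ℕ} (m : Fin N → ℝ) {a : ℝ} (ha : 0 < a) (v : Fin N → E) :
    (1 / 2 : ℝ) * ∑ i, m i * ‖(a • v) i‖ ^ 2
      = a ^ 2 * ((1 / 2 : ℝ) * ∑ i, m i * ‖v i‖ ^ 2) := by
  simp only [Pi.smul_apply, norm_smul, Real.norm_eq_abs, abs_of_pos ha]
  rw [Finset.mul_sum, Finset.mul_sum, Finset.mul_sum]
  exact Finset.sum_congr rfl fun i _ => by ring

lemma action_scale {N : ℕ} {κ : ℝ} (m : Fin N → ℝ) (γ γ' : ℝ → Fin N → E)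
    {lam : ℝ} (T : ℝ) (hl : 0 < lam) :
    action κ m (fun t => lam • γ ((lam ^ (1 + κ))⁻¹ * t))
        (fun t => (lam * (lam ^ (1 + κ))⁻¹) • γ' ((lam ^ (1 + κ))⁻¹ * t)) 0 (lam ^ (1 + κ) * T)
      = ENNReal.ofReal (lam ^ (1 - κ)) * action κ m γ γ' 0 T := by
  set c := lam ^ (1 + κ) with hcdef
  have hc : 0 < c := Real.rpow_pos_of_pos hl _
  have hac : lam * c⁻¹ = lam ^ (-κ) := by
    rw [hcdef, ← Real.rpow_neg hl.le]
    nth_rewrite 1 [← Real.rpow_one lam]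
    rw [← Real.rpow_add hl]
    congr 1
    ring
  have hpos : 0 < lam * c⁻¹ := by positivity
  have hsq : (lam * c⁻¹) ^ 2 = lam ^ (-(2 * κ)) := by
    rw [hac, ← Real.rpow_natCast (lam ^ (-κ)) 2, ← Real.rpow_mul hl.le]
    congr 1
    push_cast
    ring
  have hpt : ∀ t : ℝ,
      ENNReal.ofReal ((1 / 2 : ℝ) * ∑ i, m i * ‖((lam * c⁻¹) • γ' (c⁻¹ * t)) i‖ ^ 2)
          + pot κ m (lam • γ (c⁻¹ * t))
        = ENNReal.ofReal (lam ^ (-(2 * κ))) *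
            (ENNReal.ofReal ((1 / 2 : ℝ) * ∑ i, m i * ‖γ' (c⁻¹ * t) i‖ ^ 2)
              + pot κ m (γ (c⁻¹ * t))) := by
    intro t
    rw [kin_smul m hpos, hsq, ENNReal.ofReal_mul (Real.rpow_nonneg hl.le _),
      pot_smul κ m hl, mul_add]
  simp only [action]
  calc ∫⁻ t in Ioc 0 (c * T),
        (ENNReal.ofReal ((1 / 2 : ℝ) * ∑ i, m i * ‖((lam * c⁻¹) • γ' (c⁻¹ * t)) i‖ ^ 2)
          + pot κ m (lam • γ (c⁻¹ * t)))
      = ∫⁻ t in Ioc 0 (c * T),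
          (fun s => ENNReal.ofReal (lam ^ (-(2 * κ))) *
            (ENNReal.ofReal ((1 / 2 : ℝ) * ∑ i, m i * ‖γ' s i‖ ^ 2) + pot κ m (γ s)))
            (c⁻¹ * t) := lintegral_congr fun t => hpt t
    _ = ENNReal.ofReal c * ∫⁻ s in Ioc 0 T,
          ENNReal.ofReal (lam ^ (-(2 * κ))) *
            (ENNReal.ofReal ((1 / 2 : ℝ) * ∑ i, m i * ‖γ' s i‖ ^ 2) + pot κ m (γ s)) :=
        lintegral_Ioc_scale (T := T) hc
          (fun s => ENNReal.ofReal (lam ^ (-(2 * κ))) *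
            (ENNReal.ofReal ((1 / 2 : ℝ) * ∑ i, m i * ‖γ' s i‖ ^ 2) + pot κ m (γ s)))
    _ = (ENNReal.ofReal c * ENNReal.ofReal (lam ^ (-(2 * κ)))) * ∫⁻ s in Ioc 0 T,
          (ENNReal.ofReal ((1 / 2 : ℝ) * ∑ i, m i * ‖γ' s i‖ ^ 2) + pot κ m (γ s)) := by
        rw [lintegral_const_mul' _ _ ENNReal.ofReal_ne_top, ← mul_assoc]
    _ = ENNReal.ofReal (lam ^ (1 - κ)) * action κ m γ γ' 0 T := by
        rw [← ENNReal.ofReal_mul hc.le, hcdef, ← Real.rpow_add hl,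
          show 1 + κ + -(2 * κ) = 1 - κ by ring]
        rfl

set_option maxHeartbeats 1000000 in
lemma acpair_scale {N : ℕ} {γ γ' : ℝ → Fin N → E} {T c : ℝ} (hc : 0 < c)
    (lam : ℝ) (h : ACPair γ γ' 0 T) :
    ACPair (fun t => lam • γ (c⁻¹ * t)) (fun t => (lam * c⁻¹) • γ' (c⁻¹ * t)) 0 (c * T) := by
  obtain ⟨hint, hftc⟩ := h
  have hc' : c ≠ 0 := hc.ne'
  constructor
  · have h1 : IntervalIntegrable (fun t => γ' (c⁻¹ * t)) volume (0 / c⁻¹) (T / c⁻¹) :=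
      hint.comp_mul_left (c := c⁻¹)
    have h2 : IntervalIntegrable (fun t => γ' (c⁻¹ * t)) volume 0 (c * T) := by
      have hz : (0:ℝ) / c⁻¹ = 0 := by simp
      have hT2 : T / c⁻¹ = c * T := by
        rw [div_eq_iff (inv_ne_zero hc'), mul_comm c T, mul_assoc,
          mul_inv_cancel₀ hc', mul_one]
      rw [hz, hT2] at h1
      exact h1
    exact h2.smul (lam * c⁻¹)
  · intro t ht
    have htc : c⁻¹ * t ∈ Icc 0 T := by
      constructor
      · exact mul_nonneg (inv_pos.2 hc).le ht.1
      · calc c⁻¹ * t ≤ c⁻¹ * (c * T) := by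
              have := ht.2
              gcongr
          _ = T := by field_simp
    show lam • γ (c⁻¹ * t)
        = lam • γ (c⁻¹ * 0) + ∫ s in (0:ℝ)..t, (lam * c⁻¹) • γ' (c⁻¹ * s)
    have hI : (∫ s in (0:ℝ)..t, (lam * c⁻¹) • γ' (c⁻¹ * s))
        = lam • ∫ s in (0:ℝ)..(c⁻¹ * t), γ' s := by
      rw [intervalIntegral.integral_smul,
        intervalIntegral.integral_comp_mul_left γ' (inv_ne_zero hc'),
        smul_smul, inv_inv, mul_zero]
      congr 1
      field_simp
    rw [mul_zero, hI, hftc _ htc, smul_add]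

lemma phiT_scale {N : ℕ} {κ : ℝ} (m : Fin N → ℝ)
    (x y : Fin N → E) {lam T : ℝ} (hl : 0 < lam) :
    phiT κ m (lam • x) (lam • y) (lam ^ (1 + κ) * T)
      ≤ ENNReal.ofReal (lam ^ (1 - κ)) * phiT κ m x y T := by
  have hk0 : (ENNReal.ofReal (lam ^ (1 - κ)) : ℝ≥0∞) ≠ 0 :=
    (ENNReal.ofReal_pos.2 (Real.rpow_pos_of_pos hl _)).ne'
  set c := lam ^ (1 + κ) with hcdef
  have hc : 0 < c := Real.rpow_pos_of_pos hl _
  have key : ENNReal.ofReal (lam ^ (1 - κ)) * phiT κ m x y T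
      = ⨅ (γ : ℝ → Fin N → E) (γ' : ℝ → Fin N → E)
          (_ : ACPair γ γ' 0 T ∧ γ 0 = x ∧ γ T = y),
            ENNReal.ofReal (lam ^ (1 - κ)) * action κ m γ γ' 0 T := by
    rw [phiT, ENNReal.mul_iInf_of_ne hk0 ENNReal.ofReal_ne_top]
    refine iInf_congr fun γ => ?_
    rw [ENNReal.mul_iInf_of_ne hk0 ENNReal.ofReal_ne_top]
    refine iInf_congr fun γ' => ?_
    rw [ENNReal.mul_iInf_of_ne hk0 ENNReal.ofReal_ne_top]
  rw [key]
  refine le_iInf fun γ => le_iInf fun γ' => le_iInf fun hP => ?_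
  obtain ⟨hac, hx, hy⟩ := hP
  have h1 : ACPair (fun t => lam • γ (c⁻¹ * t)) (fun t => (lam * c⁻¹) • γ' (c⁻¹ * t))
      0 (c * T) := acpair_scale hc lam hac
  calc phiT κ m (lam • x) (lam • y) (c * T)
      ≤ action κ m (fun t => lam • γ (c⁻¹ * t))
          (fun t => (lam * c⁻¹) • γ' (c⁻¹ * t)) 0 (c * T) := by
        rw [phiT]
        refine iInf_le_of_le _ (iInf_le_of_le _ (iInf_le _ ⟨h1, ?_, ?_⟩))
        · show lam • γ (c⁻¹ * 0) = lam • x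
          rw [mul_zero, hx]
        · show lam • γ (c⁻¹ * (c * T)) = lam • y
          rw [inv_mul_cancel_left₀ hc.ne', hy]
    _ = ENNReal.ofReal (lam ^ (1 - κ)) * action κ m γ γ' 0 T := action_scale m γ γ' T hl

lemma phi_scale_le {N : ℕ} {κ : ℝ} (m : Fin N → ℝ)
    (x y : Fin N → E) {lam : ℝ} (hl : 0 < lam) :
    phi κ m (lam • x) (lam • y) ≤ ENNReal.ofReal (lam ^ (1 - κ)) * phi κ m x y := by
  have hk0 : (ENNReal.ofReal (lam ^ (1 - κ)) : ℝ≥0∞) ≠ 0 :=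
    (ENNReal.ofReal_pos.2 (Real.rpow_pos_of_pos hl _)).ne'
  have key : ENNReal.ofReal (lam ^ (1 - κ)) * phi κ m x y
      = ⨅ (T : ℝ) (_ : 0 < T), ENNReal.ofReal (lam ^ (1 - κ)) * phiT κ m x y T := by
    rw [phi, ENNReal.mul_iInf_of_ne hk0 ENNReal.ofReal_ne_top]
    refine iInf_congr fun T => ?_
    rw [ENNReal.mul_iInf_of_ne hk0 ENNReal.ofReal_ne_top]
  rw [key]
  refine le_iInf fun T => le_iInf fun hT => ?_
  calc phi κ m (lam • x) (lam • y)
      ≤ phiT κ m (lam • x) (lam • y) (lam ^ (1 + κ) * T) := by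
        rw [phi]
        exact iInf_le_of_le _ (iInf_le _ (mul_pos (Real.rpow_pos_of_pos hl _) hT))
    _ ≤ ENNReal.ofReal (lam ^ (1 - κ)) * phiT κ m x y T := phiT_scale m x y hl

end HomogAux

/-- Homogeneity of the action potential: `φ(λx, λy) = λ^(1-κ) φ(x,y)` for `λ > 0`. -/
theorem phi_homogeneous
    {E : Type*} [NormedAddCommGroup E] [InnerProductSpace ℝ E] [FiniteDimensional ℝ E]
    [Nontrivial E]
    (κ : ℝ) (hκ : κ ∈ Ioo (0:ℝ) 1) (N : ℕ) (hN : 2 ≤ N)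
    (m : Fin N → ℝ) (hm : ∀ i, 0 < m i) :
    ∀ lam > (0:ℝ), ∀ x y : Fin N → E,
      phi κ m (lam • x) (lam • y) = ENNReal.ofReal (lam ^ (1 - κ)) * phi κ m x y := by
  intro lam hl x y
  refine le_antisymm (phi_scale_le m x y hl) ?_
  have h2 : phi κ m x y ≤ ENNReal.ofReal (lam⁻¹ ^ (1 - κ)) * phi κ m (lam • x) (lam • y) := by
    have h := phi_scale_le (κ := κ) m (lam • x) (lam • y) (inv_pos.2 hl)
    rwa [inv_smul_smul₀ hl.ne', inv_smul_smul₀ hl.ne'] at h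
  calc ENNReal.ofReal (lam ^ (1 - κ)) * phi κ m x y
      ≤ ENNReal.ofReal (lam ^ (1 - κ)) *
          (ENNReal.ofReal (lam⁻¹ ^ (1 - κ)) * phi κ m (lam • x) (lam • y)) :=
        mul_le_mul_right h2 _
    _ = phi κ m (lam • x) (lam • y) := by
        rw [← mul_assoc, ← ENNReal.ofReal_mul (Real.rpow_nonneg hl.le _),
          ← Real.mul_rpow hl.le (inv_nonneg.2 hl.le), mul_inv_cancel₀ hl.ne',
          Real.one_rpow, ENNReal.ofReal_one, one_mul]
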